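/- Let S = k[x₁, …, xₙ] be a polynomial ring over a field k with homogeneous maximal ideal 𝔪 = (x₁, …, xₙ). Let J be a monomial ideal of S and let P be a set of variables such that P ∩ Supp(J) = ∅, and let 𝔭 be the ideal generated by P. Then for every integer s ≥ 0, 𝔭J ∩ 𝔪^{s+1}J = 𝔪^{s}𝔭J. -/

import Mathlib

open MvPolynomial Pointwise

noncomputable section

variable {k : Type*} [Field k]

/-- A monomial ideal: an ideal generated by monomials. -/
def IsMonomialIdeal {σ : Type*} (I : Ideal (MvPolynomial σ k)) : Prop :=
  ∃ A : Set (σ →₀ ℕ), I = Ideal.span ((fun a => MvPolynomial.monomial a (1 : k)) '' A)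

/-- The exponent vectors of the minimal monomial generators of a monomial ideal:
the exponents of monomials of `I` that are minimal with respect to the componentwise
order (equivalently, divisibility). -/
def minimalExponents {σ : Type*} (I : Ideal (MvPolynomial σ k)) : Set (σ →₀ ℕ) :=
  {a : σ →₀ ℕ | MvPolynomial.monomial a (1 : k) ∈ I ∧
    ∀ b : σ →₀ ℕ, MvPolynomial.monomial b (1 : k) ∈ I → b ≤ a → b = a}

/-- `Supp(I)`: the set of variables appearing in some minimal monomial generator of `I`. -/
def idealSupport {σ : Type*} (I : Ideal (MvPolynomial σ k)) : Set σ :=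
  {i : σ | ∃ a ∈ minimalExponents I, a i ≠ 0}

namespace MonomialIdealAux

variable {σ : Type*}

lemma degree_add (a b : σ →₀ ℕ) : (a + b).degree = a.degree + b.degree := by
  simp [Finsupp.degree_eq_weight_one, map_add]

lemma degree_single (i : σ) : (Finsupp.single i 1).degree = 1 := by
  exact Finsupp.degree_single i 1

lemma degree_mono {a b : σ →₀ ℕ} (h : a ≤ b) : a.degree ≤ b.degree := by
  obtain ⟨c, rfl⟩ := le_iff_exists_add.mp h
  rw [degree_add]; exact Nat.le_add_right _ _

lemma eq_of_le_of_degree_le {a b : σ →₀ ℕ} (h : a ≤ b) (hd : b.degree ≤ a.degree) : a = b := by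
  obtain ⟨c, rfl⟩ := le_iff_exists_add.mp h
  rw [degree_add] at hd
  have : c.degree = 0 := by omega
  rw [Finsupp.degree_eq_zero_iff] at this
  simp [this]

lemma degree_lt_of_lt {a b : σ →₀ ℕ} (h : a ≤ b) (hne : a ≠ b) : a.degree < b.degree := by
  rcases lt_or_ge a.degree b.degree with h' | h'
  · exact h'
  · exact absurd (eq_of_le_of_degree_le h h') hne

/-- monomial ideals are up-closed on exponents (true for any ideal). -/
lemma mem_of_le (I : Ideal (MvPolynomial σ k)) {a b : σ →₀ ℕ} (h : a ≤ b)
    (ha : MvPolynomial.monomial a (1 : k) ∈ I) : MvPolynomial.monomial b (1 : k) ∈ I := by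
  have : (MvPolynomial.monomial b (1 : k)) =
      MvPolynomial.monomial (b - a) (1 : k) * MvPolynomial.monomial a (1 : k) := by
    rw [MvPolynomial.monomial_mul, one_mul, tsub_add_cancel_of_le h]
  rw [this]
  exact I.mul_mem_left _ ha

lemma exists_minimal_aux (I : Ideal (MvPolynomial σ k)) :
    ∀ (N : ℕ) (d : σ →₀ ℕ), d.degree ≤ N → MvPolynomial.monomial d (1 : k) ∈ I →
      ∃ a ∈ minimalExponents I, a ≤ d := by
  intro N
  induction N with
  | zero =>
    intro d hd hmem
    have hd0 : d = 0 := by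
      rw [← Finsupp.degree_eq_zero_iff]; omega
    refine ⟨d, ⟨hmem, fun b hb hbd => ?_⟩, le_rfl⟩
    subst hd0
    exact le_antisymm hbd zero_le
  | succ N ih =>
    intro d hd hmem
    by_cases h : ∀ b : σ →₀ ℕ, MvPolynomial.monomial b (1 : k) ∈ I → b ≤ d → b = d
    · exact ⟨d, ⟨hmem, h⟩, le_rfl⟩
    · push_neg at h
      obtain ⟨b, hbI, hbd, hbne⟩ := h
      have : b.degree < d.degree := degree_lt_of_lt hbd hbne
      obtain ⟨a, haM, hab⟩ := ih b (by omega) hbI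
      exact ⟨a, haM, hab.trans hbd⟩

lemma exists_minimal (I : Ideal (MvPolynomial σ k)) {d : σ →₀ ℕ}
    (hmem : MvPolynomial.monomial d (1 : k) ∈ I) : ∃ a ∈ minimalExponents I, a ≤ d :=
  exists_minimal_aux I d.degree d le_rfl hmem

/-- A monomial ideal is spanned by its minimal exponents. -/
lemma span_minimalExponents {I : Ideal (MvPolynomial σ k)} (hI : IsMonomialIdeal I) :
    I = Ideal.span ((fun a => MvPolynomial.monomial a (1 : k)) '' minimalExponents I) := by
  obtain ⟨A, hA⟩ := hI
  apply le_antisymm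
  · conv_lhs => rw [hA]
    rw [Ideal.span_le]
    rintro _ ⟨a, ha, rfl⟩
    have haI : MvPolynomial.monomial a (1 : k) ∈ I := by
      rw [hA]; exact Ideal.subset_span ⟨a, ha, rfl⟩
    obtain ⟨m, hm, hma⟩ := exists_minimal I haI
    exact mem_of_le _ hma (Ideal.subset_span ⟨m, hm, rfl⟩)
  · rw [Ideal.span_le]
    rintro _ ⟨a, ha, rfl⟩
    exact ha.1

lemma span_mon_mul (A B : Set (σ →₀ ℕ)) :
    Ideal.span ((fun a => MvPolynomial.monomial a (1 : k)) '' A) *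
      Ideal.span ((fun a => MvPolynomial.monomial a (1 : k)) '' B) =
    Ideal.span ((fun a => MvPolynomial.monomial a (1 : k)) '' (A + B)) := by
  rw [Ideal.span_mul_span']
  congr 1
  ext f
  constructor
  · rintro ⟨_, ⟨a, ha, rfl⟩, _, ⟨b, hb, rfl⟩, rfl⟩
    exact ⟨a + b, ⟨a, ha, b, hb, rfl⟩, by simp [MvPolynomial.monomial_mul]⟩
  · rintro ⟨_, ⟨a, ha, b, hb, rfl⟩, rfl⟩
    exact ⟨_, ⟨a, ha, rfl⟩, _, ⟨b, hb, rfl⟩, by simp [MvPolynomial.monomial_mul]⟩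

/-- Exponent vectors of total degree `t`. -/
def D (t : ℕ) : Set (σ →₀ ℕ) := {a | a.degree = t}

lemma range_X_eq :
    Set.range (MvPolynomial.X : σ → MvPolynomial σ k) =
      (fun a => MvPolynomial.monomial a (1 : k)) '' D 1 := by
  ext f
  constructor
  · rintro ⟨i, rfl⟩
    exact ⟨Finsupp.single i 1, degree_single i, rfl⟩
  · rintro ⟨a, ha, rfl⟩
    have h0 : a ≠ 0 := by
      intro h; rw [h] at ha; simp [D] at ha
    obtain ⟨i, hi⟩ := Finsupp.ne_iff.mp h0
    simp only [Finsupp.coe_zero, Pi.zero_apply] at hi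
    have hle : Finsupp.single i 1 ≤ a := Finsupp.single_le_iff.mpr (Nat.one_le_iff_ne_zero.mpr hi)
    have : Finsupp.single i 1 = a := by
      apply eq_of_le_of_degree_le hle
      rw [degree_single]; exact le_of_eq ha
    exact ⟨i, by rw [← this]; rfl⟩

lemma D_add_D (t : ℕ) : (D t + D 1 : Set (σ →₀ ℕ)) = D (t + 1) := by
  ext c
  constructor
  · rintro ⟨a, ha, b, hb, rfl⟩
    simp only [D, Set.mem_setOf_eq] at *
    rw [degree_add, ha, hb]
  · intro hc
    simp only [D, Set.mem_setOf_eq] at hc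
    have h0 : c ≠ 0 := by
      intro h; rw [h] at hc; simp at hc
    obtain ⟨i, hi⟩ := Finsupp.ne_iff.mp h0
    simp only [Finsupp.coe_zero, Pi.zero_apply] at hi
    have hle : Finsupp.single i 1 ≤ c := Finsupp.single_le_iff.mpr (Nat.one_le_iff_ne_zero.mpr hi)
    refine ⟨c - Finsupp.single i 1, ?_, Finsupp.single i 1, degree_single i,
      tsub_add_cancel_of_le hle⟩
    have := degree_add (c - Finsupp.single i 1) (Finsupp.single i 1)
    rw [tsub_add_cancel_of_le hle, hc, degree_single] at this
    simp only [D, Set.mem_setOf_eq]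
    omega
  
lemma pow_maxIdeal (t : ℕ) :
    (Ideal.span (Set.range (MvPolynomial.X : σ → MvPolynomial σ k))) ^ t =
      Ideal.span ((fun a => MvPolynomial.monomial a (1 : k)) '' D t) := by
  induction t with
  | zero =>
    have : (D 0 : Set (σ →₀ ℕ)) = {0} := by
      ext a; simp [D, Finsupp.degree_eq_zero_iff]
    rw [pow_zero, this]
    simp [Ideal.one_eq_top, Ideal.span_singleton_one, MvPolynomial.monomial_zero']
  | succ t ih =>
    rw [pow_succ, ih, range_X_eq, span_mon_mul, D_add_D]

lemma exists_le_degree : ∀ (s : ℕ) (r : σ →₀ ℕ), s ≤ r.degree → ∃ b ≤ r, b.degree = s := by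
  intro s
  induction s with
  | zero => exact fun r _ => ⟨0, zero_le, map_zero _⟩
  | succ s ih =>
    intro r hr
    obtain ⟨b, hbr, hbs⟩ := ih r (by omega)
    have hne : b ≠ r := by
      intro h; rw [h] at hbs; omega
    obtain ⟨i, hi⟩ := Finsupp.ne_iff.mp hne
    have hlt : b i < r i := lt_of_le_of_ne (Finsupp.le_def.mp hbr i) hi
    refine ⟨b + Finsupp.single i 1, ?_, by rw [degree_add, hbs, degree_single]⟩
    rw [Finsupp.le_def]
    intro j
    by_cases hj : j = i
    · subst hj
      simpa using hlt
    · have h1 := Finsupp.le_def.mp hbr j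
      have h2 : (Finsupp.single i (1:ℕ)) j = 0 := Finsupp.single_eq_of_ne' (Ne.symm hj)
      rw [Finsupp.add_apply, h2]
      omega

end MonomialIdealAux

theorem prime_mul_inter_pow_maxIdeal_mul {k : Type*} [Field k] {n : ℕ}
    (J : Ideal (MvPolynomial (Fin n) k)) (hJ : IsMonomialIdeal J)
    (P : Set (Fin n)) (hP : ∀ i ∈ P, i ∉ idealSupport J) (s : ℕ) :
    (Ideal.span ((fun i => (X i : MvPolynomial (Fin n) k)) '' P) * J) ⊓
        (Ideal.span (Set.range (X : Fin n → MvPolynomial (Fin n) k)) ^ (s + 1) * J) =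
      Ideal.span (Set.range (X : Fin n → MvPolynomial (Fin n) k)) ^ s *
        (Ideal.span ((fun i => (X i : MvPolynomial (Fin n) k)) '' P) * J) := by
  classical
  open MonomialIdealAux in
  -- notation
  set M : Set (Fin n →₀ ℕ) := minimalExponents J with hM
  have hJM : J = Ideal.span ((fun a => MvPolynomial.monomial a (1 : k)) '' M) :=
    MonomialIdealAux.span_minimalExponents hJ
  have hPM : ∀ i ∈ P, ∀ a ∈ M, a i = 0 := by
    intro i hi a ha
    by_contra h
    exact hP i hi ⟨a, ha, h⟩
  set E : Set (Fin n →₀ ℕ) := (fun i => Finsupp.single i 1) '' P with hE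
  have hEP : ((fun i => (X i : MvPolynomial (Fin n) k)) '' P) =
      (fun a => MvPolynomial.monomial a (1 : k)) '' E := by
    rw [hE, Set.image_image]
    rfl
  rw [hEP, hJM, MonomialIdealAux.pow_maxIdeal (s+1), MonomialIdealAux.pow_maxIdeal s,
    MonomialIdealAux.span_mon_mul, MonomialIdealAux.span_mon_mul,
    MonomialIdealAux.span_mon_mul]
  ext f
  rw [Ideal.mem_inf, MvPolynomial.mem_ideal_span_monomial_image,
    MvPolynomial.mem_ideal_span_monomial_image, MvPolynomial.mem_ideal_span_monomial_image]
  constructor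
  · rintro ⟨h1, h2⟩ c hc
    obtain ⟨u, ⟨e, ⟨i, hiP, rfl⟩, a, haM, rfl⟩, huc⟩ := h1 c hc
    obtain ⟨v, ⟨b, hbD, d, hdM, rfl⟩, hvc⟩ := h2 c hc
    -- u' := single i 1 + d ≤ c
    have hdi : d i = 0 := hPM i hiP d hdM
    have hu'c : Finsupp.single i 1 + d ≤ c := by
      rw [Finsupp.le_def]
      intro l
      by_cases hl : l = i
      · subst hl
        have h1 := Finsupp.le_def.mp huc l
        rw [Finsupp.add_apply, Finsupp.single_eq_same] at h1 ⊢
        rw [hdi]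
        omega
      · have h1 := Finsupp.le_def.mp hvc l
        have h2 : (Finsupp.single i (1:ℕ)) l = 0 := Finsupp.single_eq_of_ne' (Ne.symm hl)
        rw [Finsupp.add_apply, h2]
        rw [Finsupp.add_apply] at h1
        omega
    -- degree count
    have hdegc : (Finsupp.single i 1 + d).degree + (c - (Finsupp.single i 1 + d)).degree
        = c.degree := by
      rw [← degree_add, add_tsub_cancel_of_le hu'c]
    have hdegv : b.degree + d.degree ≤ c.degree := by
      have := degree_mono hvc
      rwa [degree_add] at this
    have hbD' : b.degree = s + 1 := hbD
    have hru : s ≤ (c - (Finsupp.single i 1 + d)).degree := by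
      rw [degree_add, degree_single] at hdegc
      omega
    obtain ⟨b', hb'r, hb's⟩ := MonomialIdealAux.exists_le_degree s _ hru
    refine ⟨b' + (Finsupp.single i 1 + d),
      ⟨b', hb's, Finsupp.single i 1 + d, ⟨Finsupp.single i 1, ⟨i, hiP, rfl⟩, d, hdM, rfl⟩, rfl⟩,
      ?_⟩
    calc b' + (Finsupp.single i 1 + d)
        ≤ (c - (Finsupp.single i 1 + d)) + (Finsupp.single i 1 + d) :=
          add_le_add_left hb'r _
      _ = c := tsub_add_cancel_of_le hu'c
  · intro h
    constructor
    · intro c hc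
      obtain ⟨w, ⟨b', hb', u, hu, rfl⟩, hwc⟩ := h c hc
      exact ⟨u, hu, le_trans (le_add_self) hwc⟩
    · intro c hc
      obtain ⟨w, ⟨b', hb', _, ⟨e, ⟨i, hiP, rfl⟩, a, haM, rfl⟩, rfl⟩, hwc⟩ := h c hc
      refine ⟨(b' + Finsupp.single i 1) + a, ⟨b' + Finsupp.single i 1, ?_, a, haM, rfl⟩, ?_⟩
      · simp only [MonomialIdealAux.D, Set.mem_setOf_eq] at hb' ⊢
        rw [MonomialIdealAux.degree_add, MonomialIdealAux.degree_single, hb']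
      · calc (b' + Finsupp.single i 1) + a = b' + (Finsupp.single i 1 + a) := add_assoc _ _ _
          _ ≤ c := hwc

end
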